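/- If A ⊆ B ⊆ ℝ where B is the closure of A, A is well-ordered, and the set of accumulation points of A is unbounded above, then A and B, viewed as well-ordered sets, have the same order type (ordinal). -/
import Mathlib


/-- The ordinal (order type) of a well-ordered subset of `ℝ`. -/
noncomputable def wfOrdinal (A : Set ℝ) (h : A.IsWF) : Ordinal :=
  letI : IsWellFounded A (· < ·) := ⟨h⟩
  Ordinal.type ((· < ·) : A → A → Prop)

/-- if `A ⊆ ℝ` is well-ordered and the set of accumulation
points of `A` is unbounded above, then `A` and its closure have the same
order type. -/
theorem closure_same_order_type (A : Set ℝ) (hA : A.IsWF)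
    (hB : (closure A).IsWF)
    (hacc : ∀ M : ℝ, ∃ y, M < y ∧ AccPt y (Filter.principal A)) :
    wfOrdinal A hA = wfOrdinal (closure A) hB := by
  -- A is unbounded above
  have hub : ∀ M : ℝ, ((A ∩ Set.Ioi M) : Set ℝ).Nonempty := by
    intro M
    obtain ⟨y, hMy, hy⟩ := hacc M
    have hy' : y ∈ closure A := by
      rw [mem_closure_iff_clusterPt]; exact hy.clusterPt
    rw [mem_closure_iff] at hy'
    obtain ⟨a, ha1, ha2⟩ := hy' (Set.Ioi M) isOpen_Ioi hMy
    exact ⟨a, ha2, ha1⟩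
  have hWF : ∀ M : ℝ, ((A ∩ Set.Ioi M) : Set ℝ).IsWF :=
    fun M => hA.mono Set.inter_subset_left
  set m : ℝ → ℝ := fun M => (hWF M).min (hub M) with hm
  have hmem : ∀ M : ℝ, m M ∈ A ∩ Set.Ioi M := fun M => (hWF M).min_mem (hub M)
  letI : IsWellFounded A (· < ·) := ⟨hA⟩
  letI : IsWellFounded (closure A) (· < ·) := ⟨hB⟩
  unfold wfOrdinal
  apply le_antisymm
  · have hmono : StrictMono (fun a : A =>
        (⟨(a : ℝ), subset_closure a.2⟩ : (closure A : Set ℝ))) := fun a b h => h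
    exact (OrderEmbedding.ofStrictMono _ hmono).ltEmbedding.ordinal_type_le
  · -- map each b in closure A to min of A above b
    have key : ∀ b1 b2 : ℝ, b2 ∈ closure A → b1 < b2 → m b1 ≤ b2 := by
      intro b1 b2 hb2 hlt
      by_contra hcon
      push_neg at hcon
      rw [mem_closure_iff] at hb2
      obtain ⟨a, ha1, ha2⟩ := hb2 (Set.Ioo b1 (m b1)) isOpen_Ioo ⟨hlt, hcon⟩
      exact (hWF b1).not_lt_min (hub b1) ⟨ha2, ha1.1⟩ ha1.2
    have hmono : StrictMono (fun b : (closure A : Set ℝ) =>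
        (⟨m b, (hmem b).1⟩ : A)) := by
      intro b1 b2 h
      have h2 : (b2 : ℝ) < m (b2 : ℝ) := (hmem b2).2
      have h1 : m (b1 : ℝ) ≤ (b2 : ℝ) := by
        rcases em ((b2 : ℝ) ∈ A) with hb2A | hb2A
        · exact (hWF b1).min_le (hub b1) ⟨hb2A, h⟩
        · exact key b1 b2 b2.2 h
      exact Subtype.mk_lt_mk.mpr (lt_of_le_of_lt h1 h2)
    exact (OrderEmbedding.ofStrictMono _ hmono).ltEmbedding.ordinal_type_le
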